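/- Suppose m = 1. Let α ∈ 𝒜 be a probability vector whose support S = {j : α_j > 0} is nonempty, let i ∈ {1,…,L} with i ∉ S, and assume ∫_{ℝ^L} p_ℓ(x) |log(p̄_α(x)/g(x))| dx < ∞ for all ℓ and ∫_{ℝ^L} g(x) |log(p̄_α(x)/g(x))| dx < ∞. Then ∫_{ℝ^L} p_i(x) log(p̄_α(x)/g(x)) dx = ∫_{ℝ^L} g(x) log(p̄_α(x)/g(x)) dx < 0. -/

import Mathlib

open MeasureTheory ProbabilityTheory Filter Finset
open scoped ENNReal NNReal Classical

namespace MovingAnomaly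

/-- The observation space of the sensor network: one real observation per sensor. -/
abbrev Obs (L : ℕ) := Fin L → ℝ

/-- The sample space: an infinite sequence of vector observations.
Coordinate `n : ℕ` carries the observation `X[n+1]` at time `n+1`. -/
abbrev Traj (L : ℕ) := ℕ → Obs L

/-- The collection ℰ of all size-`m` subsets of the `L` sensors. -/
abbrev ESet (L m : ℕ) := {E : Finset (Fin L) // E.card = m}

/-- Membership in the probability simplex 𝒜 over ℰ. -/
def MemSimplex (L m : ℕ) (α : ESet L m → ℝ) : Prop :=
  (∀ E, 0 ≤ α E) ∧ ∑ E : ESet L m, α E = 1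

/-- `d` is a strictly positive probability density on ℝ (w.r.t. Lebesgue measure). -/
structure IsPosDensity (d : ℝ → ℝ) : Prop where
  meas : Measurable d
  pos : ∀ t, 0 < d t
  int_one : ∫ t, d t = 1

/-- Joint non-anomalous density `g(x) = ∏ g_ℓ(x_ℓ)`. -/
def gdens {L : ℕ} (g : Fin L → ℝ → ℝ) (x : Obs L) : ℝ := ∏ ℓ, g ℓ (x ℓ)

/-- Joint density `p_E(x)` when the anomalous sensors are those of `E`. -/
def pdens {L : ℕ} (f g : Fin L → ℝ → ℝ) (E : Finset (Fin L)) (x : Obs L) : ℝ :=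
  ∏ ℓ, if ℓ ∈ E then f ℓ (x ℓ) else g ℓ (x ℓ)

/-- The mixture density `p̄_α(x) = ∑_E α_E p_E(x)`. -/
def pbar {L m : ℕ} (f g : Fin L → ℝ → ℝ) (α : ESet L m → ℝ) (x : Obs L) : ℝ :=
  ∑ E : ESet L m, α E * pdens f g E.1 x

/-- The measure on ℝ with density `d` w.r.t. Lebesgue measure. -/
noncomputable def densMeasure (d : ℝ → ℝ) : Measure ℝ :=
  volume.withDensity fun t => ENNReal.ofReal (d t)

/-- The product measure on `ℝ^L` whose `ℓ`-th marginal has density `d ℓ`. -/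
noncomputable def jointMeasure {L : ℕ} (d : Fin L → ℝ → ℝ) : Measure (Obs L) :=
  Measure.pi fun ℓ => densMeasure (d ℓ)

/-- The measure with joint density `p_E`. -/
noncomputable def pMeasure {L : ℕ} (f g : Fin L → ℝ → ℝ) (E : Finset (Fin L)) :
    Measure (Obs L) :=
  jointMeasure fun ℓ => if ℓ ∈ E then f ℓ else g ℓ

/-- The mixture measure with density `p̄_α`. -/
noncomputable def mixMeasure {L m : ℕ} (f g : Fin L → ℝ → ℝ) (α : ESet L m → ℝ) :
    Measure (Obs L) :=
  ∑ E : ESet L m, ENNReal.ofReal (α E) • pMeasure f g E.1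

/-- `P` is the infinite product measure on the sequence space under which the coordinates
are independent and coordinate `n` has law `μ n`. -/
def IsProductLaw {L : ℕ} (P : Measure (Traj L)) (μ : ℕ → Measure (Obs L)) : Prop :=
  IsProbabilityMeasure P ∧
    iIndepFun (fun n (ω : Traj L) => ω n) P ∧
    ∀ n, P.map (fun ω => ω n) = μ n

/-- The natural filtration: `Fil L k = σ(X[1],…,X[k])`. -/
def Fil (L : ℕ) (k : ℕ) : MeasurableSpace (Traj L) :=
  MeasurableSpace.comap (fun (ω : Traj L) (i : Fin k) => ω i) inferInstance

/-- A stopping time of the natural filtration (valued in ℕ ∪ {∞}, time 0 excluded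
by requiring values ≥ 1 where needed). -/
def IsStopping {L : ℕ} (τ : Traj L → ℕ∞) : Prop :=
  ∀ k : ℕ, MeasurableSet[Fil L k] {ω | τ ω ≤ (k : ℕ∞)}

/-- The quantity `esssup_{τ>ν} E_P[τ - ν | F_ν]`, with the convention that it equals `1`
when `P(τ > ν) = 0`. -/
noncomputable def condDelay {L : ℕ} (P : Measure (Traj L)) (ν : ℕ) (τ : Traj L → ℕ∞) :
    ℝ≥0∞ :=
  if hP : IsFiniteMeasure P then
    haveI := hP
    if P {ω | (ν : ℕ∞) < τ ω} = 0 then 1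
    else
      essSup
        (fun ω => ∫⁻ ω', ((τ ω' - (ν : ℕ∞) : ℕ∞) : ℝ≥0∞) ∂(condExpKernel P (Fil L ν) ω))
        (P.restrict {ω | (ν : ℕ∞) < τ ω})
  else 1

/-- Lorden-type worst-path delay `WADD(τ)`, given the family of measures `PS S ν = P_ν^S`. -/
noncomputable def wadd {L m : ℕ} (PS : (ℕ → ESet L m) → ℕ → Measure (Traj L))
    (τ : Traj L → ℕ∞) : ℝ≥0∞ :=
  ⨆ (S : ℕ → ESet L m) (ν : ℕ), condDelay (PS S ν) ν τ

/-- The delay `\overline{WADD}_α(τ)` for the randomized-anomaly model, given the family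
`Pb ν = P̄_ν^α`. -/
noncomputable def waddBar {L : ℕ} (Pb : ℕ → Measure (Traj L)) (τ : Traj L → ℕ∞) : ℝ≥0∞ :=
  ⨆ ν : ℕ, condDelay (Pb ν) ν τ

/-- Mean time to false alarm `E_∞[τ]` (as an extended nonnegative real). -/
noncomputable def mtfa {L : ℕ} (Pinf : Measure (Traj L)) (τ : Traj L → ℕ∞) : ℝ≥0∞ :=
  ∫⁻ ω, ((τ ω : ℕ∞) : ℝ≥0∞) ∂Pinf

/-- The class `C_γ` of stopping times with mean time to false alarm at least `γ`. -/
def Cgamma {L : ℕ} (Pinf : Measure (Traj L)) (γ : ℝ) (τ : Traj L → ℕ∞) : Prop :=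
  IsStopping τ ∧ ENNReal.ofReal γ ≤ mtfa Pinf τ

/-- The CUSUM statistic driven by the likelihood ratio `lr`:
`W[0] = 0`, `W[k] = max(W[k-1],1) * lr(X[k])`. -/
noncomputable def cusumStat {L : ℕ} (lr : Obs L → ℝ) (ω : Traj L) : ℕ → ℝ
  | 0 => 0
  | k + 1 => max (cusumStat lr ω k) 1 * lr (ω k)

/-- The instantaneous likelihood ratio `p̄_λ(x)/g(x)` of the M-CUSUM test. -/
noncomputable def mlr {L m : ℕ} (f g : Fin L → ℝ → ℝ) (lam : ESet L m → ℝ) (x : Obs L) : ℝ :=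
  pbar f g lam x / gdens g x

/-- The M-CUSUM stopping time `τ_W(λ, b) = inf {k ≥ 1 : W_λ[k] ≥ e^b}` (∞ if no such k). -/
noncomputable def mcusumTime {L m : ℕ} (f g : Fin L → ℝ → ℝ) (lam : ESet L m → ℝ) (b : ℝ)
    (ω : Traj L) : ℕ∞ :=
  sInf {t : ℕ∞ | ∃ k : ℕ, t = (k : ℕ∞) ∧ 1 ≤ k ∧ Real.exp b ≤ cusumStat (mlr f g lam) ω k}

/-- The Kullback–Leibler number `I_α = ∫ p̄_α log(p̄_α/g)`. -/
noncomputable def KLnum {L m : ℕ} (f g : Fin L → ℝ → ℝ) (α : ESet L m → ℝ) : ℝ :=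
  ∫ x : Obs L, pbar f g α x * Real.log (pbar f g α x / gdens g x)

/-- Joint density with the single anomaly at node `ℓ` (case `m = 1`):
`p_ℓ(x) = f_ℓ(x_ℓ) ∏_{r ≠ ℓ} g_r(x_r)`. -/
def pdens1 {L : ℕ} (f g : Fin L → ℝ → ℝ) (ℓ : Fin L) (x : Obs L) : ℝ :=
  ∏ r, if r = ℓ then f r (x r) else g r (x r)

/-- The mixture `p̄_α(x) = ∑_ℓ α_ℓ p_ℓ(x)` (case `m = 1`, `ℰ` identified with `{1,…,L}`). -/
def pbar1 {L : ℕ} (f g : Fin L → ℝ → ℝ) (α : Fin L → ℝ) (x : Obs L) : ℝ :=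
  ∑ ℓ, α ℓ * pdens1 f g ℓ x

/-- A strictly positive probability density is integrable. -/
lemma IsPosDensity.integrable {d : ℝ → ℝ} (hd : IsPosDensity d) :
    MeasureTheory.Integrable d := by
  by_contra h
  have h1 := hd.int_one
  rw [MeasureTheory.integral_undef h] at h1
  norm_num at h1

/-- Negative drift off the support in the single-anomaly case.  For
`m = 1`, if `α` has nonempty support `S`, `i ∉ S`, and the stated integrability holds, then
`∫ p_i log(p̄_α/g) = ∫ g log(p̄_α/g) < 0`. -/
theorem stmt18 {L : ℕ} (hL : 1 ≤ L)
    (f g : Fin L → ℝ → ℝ)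
    (hf : ∀ ℓ, IsPosDensity (f ℓ)) (hg : ∀ ℓ, IsPosDensity (g ℓ))
    (hfg : ∀ ℓ, 0 < volume {t | f ℓ t ≠ g ℓ t})
    (α : Fin L → ℝ) (hαnn : ∀ r, 0 ≤ α r) (hαsum : ∑ r, α r = 1)
    (hsupp : ∃ j, 0 < α j)
    (i : Fin L) (hi : α i = 0)
    (habs : ∀ ℓ : Fin L,
      ∫⁻ x : Obs L, ENNReal.ofReal
        (pdens1 f g ℓ x * |Real.log (pbar1 f g α x / gdens g x)|) ∂volume < ⊤)
    (habsg : ∫⁻ x : Obs L, ENNReal.ofReal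
        (gdens g x * |Real.log (pbar1 f g α x / gdens g x)|) ∂volume < ⊤) :
    (∫ x : Obs L, pdens1 f g i x * Real.log (pbar1 f g α x / gdens g x)) =
        ∫ x : Obs L, gdens g x * Real.log (pbar1 f g α x / gdens g x) ∧
      (∫ x : Obs L, gdens g x * Real.log (pbar1 f g α x / gdens g x)) < 0 := by
  classical
  obtain ⟨j, hj⟩ := hsupp
  have hfm : ∀ ℓ, Measurable (f ℓ) := fun ℓ => (hf ℓ).meas
  have hgm : ∀ ℓ, Measurable (g ℓ) := fun ℓ => (hg ℓ).meas
  have hgpos : ∀ x : Obs L, 0 < gdens g x := fun x =>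
    Finset.prod_pos fun ℓ _ => (hg ℓ).pos _
  set R : Obs L → ℝ := fun x => ∑ ℓ, α ℓ * (f ℓ (x ℓ) / g ℓ (x ℓ)) with hRdef
  have hRmeas : Measurable R := Finset.measurable_sum _ fun ℓ _ =>
    measurable_const.mul (((hfm ℓ).comp (measurable_pi_apply ℓ)).div
      ((hgm ℓ).comp (measurable_pi_apply ℓ)))
  have hpd : ∀ (ℓ : Fin L) (x : Obs L),
      pdens1 f g ℓ x = f ℓ (x ℓ) / g ℓ (x ℓ) * gdens g x := by
    intro ℓ x
    have hcompl : ∏ r ∈ ({ℓ}ᶜ : Finset (Fin L)), (if r = ℓ then f r (x r) else g r (x r))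
        = ∏ r ∈ ({ℓ}ᶜ : Finset (Fin L)), g r (x r) :=
      Finset.prod_congr rfl fun r hr => if_neg (by simpa using hr)
    rw [pdens1, gdens, Fintype.prod_eq_mul_prod_compl ℓ
        (fun r => if r = ℓ then f r (x r) else g r (x r)),
      Fintype.prod_eq_mul_prod_compl ℓ (fun r => g r (x r)),
      if_pos rfl, hcompl, ← mul_assoc, div_mul_cancel₀ _ ((hg ℓ).pos (x ℓ)).ne']
  have hpbarR : ∀ x, pbar1 f g α x = R x * gdens g x := by
    intro x
    rw [pbar1, hRdef, Finset.sum_mul]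
    exact Finset.sum_congr rfl fun ℓ _ => by rw [hpd ℓ x, mul_assoc]
  have hratio : ∀ x : Obs L, pbar1 f g α x / gdens g x = R x := fun x => by
    rw [hpbarR x, mul_div_assoc, div_self (hgpos x).ne', mul_one]
  have hRpos : ∀ x, 0 < R x := fun x =>
    Finset.sum_pos' (fun ℓ _ => mul_nonneg (hαnn ℓ)
        (div_pos ((hf ℓ).pos _) ((hg ℓ).pos _)).le)
      ⟨j, Finset.mem_univ j, mul_pos hj (div_pos ((hf j).pos _) ((hg j).pos _))⟩
  simp only [hratio] at habsg ⊢
  -- Part 1 : the two integrals agree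
  have key : ∀ d : ℝ → ℝ, (∫ t, d t) = 1 →
      (∫ x : Obs L, (∏ r, if r = i then d (x r) else g r (x r)) * Real.log (R x))
        = ∫ y : ({r : Fin L // r ≠ i} → ℝ),
            (∏ r : {r : Fin L // r ≠ i}, g r.1 (y r)) *
              Real.log (∑ r : {r : Fin L // r ≠ i}, α r.1 * (f r.1 (y r) / g r.1 (y r)))
            ∂(Measure.pi fun _ => volume) := by
    intro d hd1
    have hMP := measurePreserving_piEquivPiSubtypeProd
      (fun _ : Fin L => (volume : Measure ℝ)) (fun r => r ≠ i)
    set A : ({r : Fin L // r ≠ i} → ℝ) → ℝ := fun y =>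
      (∏ r : {r : Fin L // r ≠ i}, g r.1 (y r)) *
        Real.log (∑ r : {r : Fin L // r ≠ i}, α r.1 * (f r.1 (y r) / g r.1 (y r))) with hA
    have hsplit : ∀ x : Obs L,
        (∏ r, if r = i then d (x r) else g r (x r)) * Real.log (R x)
          = A (fun r => x r.1) * d (x i) := by
      intro x
      have h1 : (∏ r, if r = i then d (x r) else g r (x r))
          = d (x i) * ∏ r : {r : Fin L // r ≠ i}, g r.1 (x r.1) := by
        rw [Fintype.prod_eq_mul_prod_compl i, if_pos rfl]
        congr 1
        rw [← Finset.prod_subtype ({i}ᶜ : Finset (Fin L))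
          (fun r => by simp) (fun r => g r (x r))]
        exact Finset.prod_congr rfl fun r hr => if_neg (by simpa using hr)
      have h2 : R x = ∑ r : {r : Fin L // r ≠ i},
          α r.1 * (f r.1 (x r.1) / g r.1 (x r.1)) := by
        rw [hRdef]
        dsimp only
        rw [Fintype.sum_eq_add_sum_compl i, hi, zero_mul, zero_add,
          ← Finset.sum_subtype ({i}ᶜ : Finset (Fin L)) (fun r => by simp)
            (fun r => α r * (f r (x r) / g r (x r)))]
      rw [h1, h2, hA]
      ring
    calc (∫ x : Obs L, (∏ r, if r = i then d (x r) else g r (x r)) * Real.log (R x))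
        = ∫ x : Obs L, A (fun r => x r.1) * d (x i) :=
          integral_congr_ae (Filter.Eventually.of_forall hsplit)
      _ = ∫ z, A z.1 * d (z.2 ⟨i, not_not_intro rfl⟩)
            ∂((Measure.pi fun _ : {r : Fin L // r ≠ i} => (volume : Measure ℝ)).prod
              (Measure.pi fun _ : {r : Fin L // ¬ r ≠ i} => (volume : Measure ℝ))) := by
          rw [MeasureTheory.volume_pi]
          exact hMP.integral_comp' fun z => A z.1 * d (z.2 ⟨i, not_not_intro rfl⟩)
      _ = (∫ y, A y ∂(Measure.pi fun _ : {r : Fin L // r ≠ i} => (volume : Measure ℝ))) *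
            ∫ z : {r : Fin L // ¬ r ≠ i} → ℝ, d (z ⟨i, not_not_intro rfl⟩)
              ∂(Measure.pi fun _ : {r : Fin L // ¬ r ≠ i} => (volume : Measure ℝ)) :=
          integral_prod_mul A fun z : {r : Fin L // ¬ r ≠ i} → ℝ =>
            d (z ⟨i, not_not_intro rfl⟩)
      _ = ∫ y, A y ∂(Measure.pi fun _ : {r : Fin L // r ≠ i} => (volume : Measure ℝ)) := by
          have hprod : ∀ z : {r : Fin L // ¬ r ≠ i} → ℝ,
              d (z ⟨i, not_not_intro rfl⟩) = ∏ r : {r : Fin L // ¬ r ≠ i}, d (z r) :=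
            fun z => (Finset.prod_eq_single_of_mem
              (f := fun r : {r : Fin L // ¬ r ≠ i} => d (z r))
              (⟨i, not_not_intro rfl⟩ : {r : Fin L // ¬ r ≠ i}) (Finset.mem_univ _)
              fun b _ hb => absurd (Subtype.ext (not_not.mp b.2)) hb).symm
          have hu : (∫ z : {r : Fin L // ¬ r ≠ i} → ℝ, d (z ⟨i, not_not_intro rfl⟩)
              ∂(Measure.pi fun _ : {r : Fin L // ¬ r ≠ i} => (volume : Measure ℝ))) = 1 := by
            simp_rw [hprod]
            rw [← MeasureTheory.volume_pi,
              integral_fintype_prod_volume_eq_prod (ι := {r : Fin L // ¬ r ≠ i}) (fun _ => d), hd1,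
              Finset.prod_const_one]
          rw [hu, mul_one]
  have e1 : ∀ x : Obs L, pdens1 f g i x
      = ∏ r, if r = i then f i (x r) else g r (x r) := by
    intro x
    exact Finset.prod_congr rfl fun r _ => by
      by_cases h : r = i
      · subst h; simp
      · simp [h]
  have e2 : ∀ x : Obs L, gdens g x
      = ∏ r, if r = i then g i (x r) else g r (x r) := by
    intro x
    exact Finset.prod_congr rfl fun r _ => by
      by_cases h : r = i
      · subst h; simp
      · simp [h]
  have heq : (∫ x : Obs L, pdens1 f g i x * Real.log (R x))
      = ∫ x : Obs L, gdens g x * Real.log (R x) := by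
    simp only [e1, e2]
    rw [key (f i) (hf i).int_one, key (g i) (hg i).int_one]
  -- Part 2 : the common value is negative
  -- First: the set where the mixture differs from g has positive measure
  have hsetm : MeasurableSet {x : Obs L | R x ≠ 1} :=
    (hRmeas (measurableSet_singleton 1)).compl
  have hnull : volume {x : Obs L | R x ≠ 1} ≠ 0 := by
    intro h0
    have hMPj := measurePreserving_piEquivPiSubtypeProd
      (fun _ : Fin L => (volume : Measure ℝ)) (fun r => r ≠ j)
    set ej := MeasurableEquiv.piEquivPiSubtypeProd (fun _ : Fin L => ℝ)
      (fun r => r ≠ j) with hej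
    have h0' : (Measure.pi fun _ : Fin L => (volume : Measure ℝ))
        {x : Obs L | R x ≠ 1} = 0 := by
      rw [← MeasureTheory.volume_pi]; exact h0
    have h2 : ((Measure.pi fun _ : {r : Fin L // r ≠ j} => (volume : Measure ℝ)).prod
        (Measure.pi fun _ : {r : Fin L // ¬ r ≠ j} => (volume : Measure ℝ)))
        {z | R (ej.symm z) ≠ 1} = 0 := by
      have hpre : {z : ({r : Fin L // r ≠ j} → ℝ) × ({r : Fin L // ¬ r ≠ j} → ℝ) |
          R (ej.symm z) ≠ 1} = ej.symm ⁻¹' {x : Obs L | R x ≠ 1} := rfl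
      rw [hpre, (hMPj.symm ej).measure_preimage hsetm.nullMeasurableSet]
      exact h0'
    have h2' : ∀ᵐ z ∂((Measure.pi fun _ : {r : Fin L // r ≠ j} => (volume : Measure ℝ)).prod
        (Measure.pi fun _ : {r : Fin L // ¬ r ≠ j} => (volume : Measure ℝ))),
        R (ej.symm z) = 1 := by
      rw [MeasureTheory.ae_iff]
      exact h2
    have h3 := Measure.ae_ae_of_ae_prod h2'
    have hne : (Measure.pi fun _ : {r : Fin L // r ≠ j} => (volume : Measure ℝ)) ≠ 0 := by
      intro hzero
      have h4 : (Measure.pi fun _ : {r : Fin L // r ≠ j} => (volume : Measure ℝ))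
          Set.univ = 0 := by rw [hzero]; rfl
      rw [Measure.pi_univ] at h4
      simp [Real.volume_univ] at h4
    haveI : (MeasureTheory.ae (Measure.pi fun _ : {r : Fin L // r ≠ j} =>
        (volume : Measure ℝ))).NeBot := ae_neBot.mpr hne
    obtain ⟨y₀, hy₀⟩ := h3.exists
    set c₀ : ℝ := ∑ r : {r : Fin L // r ≠ j}, α r.1 * (f r.1 (y₀ r) / g r.1 (y₀ r)) with hc₀
    set w₀ : {r : Fin L // ¬ r ≠ j} := ⟨j, not_not_intro rfl⟩ with hw₀
    have hform : ∀ w : {r : Fin L // ¬ r ≠ j} → ℝ,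
        R (ej.symm (y₀, w)) = α j * (f j (w w₀) / g j (w w₀)) + c₀ := by
      intro w
      have hxj : (ej.symm (y₀, w)) j = w w₀ := by
        show (if h : j ≠ j then y₀ ⟨j, h⟩ else w ⟨j, h⟩) = w w₀
        rw [dif_neg (not_not_intro rfl)]
      have hxr : ∀ r : {r : Fin L // r ≠ j}, (ej.symm (y₀, w)) r.1 = y₀ r := by
        intro r
        show (if h : r.1 ≠ j then y₀ ⟨r.1, h⟩ else w ⟨r.1, h⟩) = y₀ r
        rw [dif_pos r.2]
      have hmain : R (ej.symm (y₀, w))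
          = α j * (f j ((ej.symm (y₀, w)) j) / g j ((ej.symm (y₀, w)) j))
            + ∑ r : {r : Fin L // r ≠ j}, α r.1 *
                (f r.1 ((ej.symm (y₀, w)) r.1) / g r.1 ((ej.symm (y₀, w)) r.1)) := by
        rw [hRdef]
        dsimp only
        rw [Fintype.sum_eq_add_sum_compl j,
          ← Finset.sum_subtype ({j}ᶜ : Finset (Fin L)) (fun r => by simp)
            (fun r => α r * (f r ((ej.symm (y₀, w)) r) /
              g r ((ej.symm (y₀, w)) r)))]
      rw [hmain, hxj, hc₀]
      congr 1
      exact Finset.sum_congr rfl fun r _ => by rw [hxr r]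
    have hBm : MeasurableSet {t : ℝ | ¬ (α j * (f j t / g j t) + c₀ = 1)} :=
      ((measurable_const.mul ((hfm j).div (hgm j))).add measurable_const
        (measurableSet_singleton 1)).compl
    have hy₀' : ∀ᵐ t : ℝ, α j * (f j t / g j t) + c₀ = 1 := by
      rw [MeasureTheory.ae_iff] at hy₀ ⊢
      have hcyl : {w : {r : Fin L // ¬ r ≠ j} → ℝ | ¬ R (ej.symm (y₀, w)) = 1}
          = Set.univ.pi fun _ : {r : Fin L // ¬ r ≠ j} =>
              {t : ℝ | ¬ (α j * (f j t / g j t) + c₀ = 1)} := by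
        ext w
        simp only [Set.mem_setOf_eq, hform w, Set.mem_pi, Set.mem_univ, forall_true_left]
        constructor
        · intro hw r
          have : r = w₀ := Subtype.ext (not_not.mp r.2)
          rw [this]
          exact hw
        · intro hw
          exact hw w₀
      rw [hcyl, Measure.pi_pi] at hy₀
      have hsingle : (∏ _r : {r : Fin L // ¬ r ≠ j},
          volume {t : ℝ | ¬ (α j * (f j t / g j t) + c₀ = 1)})
          = volume {t : ℝ | ¬ (α j * (f j t / g j t) + c₀ = 1)} :=
        Finset.prod_eq_single_of_mem w₀ (Finset.mem_univ _)
          fun b _ hb => absurd (Subtype.ext (not_not.mp b.2)) hb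
      rw [hsingle] at hy₀
      exact hy₀
    have hgj : ∀ t, g j t ≠ 0 := fun t => ((hg j).pos t).ne'
    have hae : ∀ᵐ t : ℝ, f j t = (1 - c₀) / α j * g j t := by
      filter_upwards [hy₀'] with t ht
      have h1 : f j t / g j t = (1 - c₀) / α j := by
        rw [eq_div_iff hj.ne']
        linarith
      rw [← h1, div_mul_cancel₀ _ (hgj t)]
    have hint : (∫ t, f j t) = ∫ t, (1 - c₀) / α j * g j t := integral_congr_ae hae
    rw [(hf j).int_one, integral_const_mul, (hg j).int_one, mul_one] at hint
    have hae2 : ∀ᵐ t : ℝ, f j t = g j t := by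
      filter_upwards [hae] with t ht
      rw [ht, ← hint, one_mul]
    have hzero : volume {t : ℝ | f j t ≠ g j t} = 0 := by
      rw [MeasureTheory.ae_iff] at hae2
      exact hae2
    exact absurd hzero (hfg j).ne'
  have hposset : 0 < volume {x : Obs L | R x ≠ 1} :=
    lt_of_le_of_ne zero_le (Ne.symm hnull)
  set D : Obs L → ℝ := fun x =>
    pbar1 f g α x - gdens g x - gdens g x * Real.log (R x) with hD
  have hD' : ∀ x, D x = gdens g x * (R x - 1 - Real.log (R x)) := fun x => by
    rw [hD]; dsimp only; rw [hpbarR x]; ring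
  have hD0 : ∀ x, 0 ≤ D x := fun x => by
    rw [hD' x]
    exact mul_nonneg (hgpos x).le (by linarith [Real.log_le_sub_one_of_pos (hRpos x)])
  have hDsub : {x : Obs L | R x ≠ 1} ⊆ Function.support D := by
    intro x hx
    have hlt := Real.log_lt_sub_one_of_pos (hRpos x) hx
    have : 0 < D x := by rw [hD' x]; exact mul_pos (hgpos x) (by linarith)
    exact this.ne'
  have hIgdens : Integrable (gdens g) :=
    Integrable.fintype_prod (f := fun ℓ => g ℓ) fun ℓ => (hg ℓ).integrable
  have hIpd : ∀ ℓ, Integrable (pdens1 f g ℓ) := by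
    intro ℓ
    refine Integrable.fintype_prod (f := fun r t => if r = ℓ then f r t else g r t)
      fun r => ?_
    by_cases h : r = ℓ
    · simpa [h] using (hf r).integrable
    · simpa [h] using (hg r).integrable
  have hIpbar : Integrable (pbar1 f g α) :=
    integrable_finset_sum _ fun ℓ _ => ((hIpd ℓ).const_mul (α ℓ))
  have hgmeas : Measurable (gdens g) :=
    Finset.measurable_prod _ fun ℓ _ => (hgm ℓ).comp (measurable_pi_apply ℓ)
  have hIgφ : Integrable (fun x : Obs L => gdens g x * Real.log (R x)) := by
    constructor
    · exact (hgmeas.mul (Real.measurable_log.comp hRmeas)).aestronglyMeasurable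
    · rw [hasFiniteIntegral_iff_norm]
      calc (∫⁻ x, ENNReal.ofReal ‖gdens g x * Real.log (R x)‖ ∂volume)
          = ∫⁻ x, ENNReal.ofReal (gdens g x * |Real.log (R x)|) ∂volume := by
            congr 1
            funext x
            rw [Real.norm_eq_abs, abs_mul, abs_of_nonneg (hgpos x).le]
        _ < ⊤ := habsg
  have hgint : (∫ x : Obs L, gdens g x) = 1 := by
    calc (∫ x : Obs L, gdens g x) = ∫ x : Obs L, ∏ ℓ, g ℓ (x ℓ) := rfl
      _ = ∏ ℓ, ∫ t, g ℓ t := integral_fintype_prod_volume_eq_prod (ι := Fin L) g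
      _ = 1 := by
        rw [Finset.prod_congr rfl fun ℓ _ => (hg ℓ).int_one, Finset.prod_const_one]
  have hpint : ∀ ℓ, (∫ x : Obs L, pdens1 f g ℓ x) = 1 := by
    intro ℓ
    calc (∫ x : Obs L, pdens1 f g ℓ x)
        = ∫ x : Obs L, ∏ r, (fun r t => if r = ℓ then f r t else g r t) r (x r) := rfl
      _ = ∏ r, ∫ t, (fun r t => if r = ℓ then f r t else g r t) r t :=
          integral_fintype_prod_volume_eq_prod (ι := Fin L) (fun r t => if r = ℓ then f r t else g r t)
      _ = 1 := by
        rw [show (∏ r, ∫ t, (fun r t => if r = ℓ then f r t else g r t) r t)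
            = ∏ _r : Fin L, (1 : ℝ) from Finset.prod_congr rfl fun r _ => ?_,
          Finset.prod_const_one]
        by_cases h : r = ℓ
        · simpa [h] using (hf r).int_one
        · simpa [h] using (hg r).int_one
  have hpbint : (∫ x : Obs L, pbar1 f g α x) = 1 := by
    calc (∫ x : Obs L, pbar1 f g α x)
        = ∑ ℓ, ∫ x : Obs L, α ℓ * pdens1 f g ℓ x :=
          integral_finset_sum _ fun ℓ _ => (hIpd ℓ).const_mul (α ℓ)
      _ = ∑ ℓ, α ℓ := by
          refine Finset.sum_congr rfl fun ℓ _ => ?_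
          rw [integral_const_mul, hpint ℓ, mul_one]
      _ = 1 := hαsum
  have hDint : Integrable D := (hIpbar.sub hIgdens).sub hIgφ
  have hDpos : 0 < ∫ x : Obs L, D x := by
    rw [integral_pos_iff_support_of_nonneg_ae (Filter.Eventually.of_forall hD0) hDint]
    exact lt_of_lt_of_le hposset (measure_mono hDsub)
  have hDval : (∫ x : Obs L, D x) = - ∫ x : Obs L, gdens g x * Real.log (R x) := by
    calc (∫ x : Obs L, D x)
        = ∫ x : Obs L, (pbar1 f g α x - gdens g x) - gdens g x * Real.log (R x) := rfl
      _ = (∫ x : Obs L, pbar1 f g α x - gdens g x)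
            - ∫ x : Obs L, gdens g x * Real.log (R x) :=
          integral_sub (hIpbar.sub hIgdens) hIgφ
      _ = - ∫ x : Obs L, gdens g x * Real.log (R x) := by
          rw [integral_sub hIpbar hIgdens, hpbint, hgint]
          ring
  exact ⟨heq, by linarith⟩

end MovingAnomaly
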